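/- For all positive integers m and n: arctan(2 / L_{2n-1}) = arctan(L_m / L_{2n+m-1}) + arctan(F_m / F_{2n+m-1}). -/
import Mathlib


def lucasNat : ℕ → ℕ
  | 0 => 2
  | 1 => 1
  | (n + 2) => lucasNat (n + 1) + lucasNat n

lemma fib_step (k i j l : ℕ) (h2 : i = k + 2) (h1 : j = k + 1) (h0 : l = k) :
    Nat.fib i = Nat.fib j + Nat.fib l := by
  subst h2 h1 h0; rw [Nat.fib_add_two, Nat.add_comm]

lemma fib_congr {i j : ℕ} (h : i = j) : Nat.fib i = Nat.fib j := by rw [h]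

lemma lucasNat_eq_fib (a : ℕ) : lucasNat (a + 1) = Nat.fib a + Nat.fib (a + 2) := by
  induction a using Nat.twoStepInduction with
  | zero => simp [lucasNat]
  | one => simp [lucasNat, Nat.fib_add_two]
  | more a ih1 ih2 =>
    show lucasNat (a + 2) + lucasNat (a + 1) = _
    rw [ih1, ih2, Nat.fib_add_two (n := a + 2), Nat.fib_add_two (n := a)]
    ring

-- d'Ocagne-type identity
lemma docagne (j u : ℕ) :
    Nat.fib (2 * j + 1) * Nat.fib (u + 2 * j + 2) =
      Nat.fib (2 * j + 2) * Nat.fib (u + 2 * j + 1) + Nat.fib u := by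
  induction j generalizing u with
  | zero => simp [Nat.fib_add_two (n := u)]; ring
  | succ j ih =>
    have r4 : Nat.fib (u + 2 * j + 4) = Nat.fib (u + 2 * j + 3) + Nat.fib (u + 2 * j + 2) :=
      fib_step (u + 2 * j + 2) _ _ _ (by ring) (by ring) rfl
    have r3 : Nat.fib (u + 2 * j + 3) = Nat.fib (u + 2 * j + 2) + Nat.fib (u + 2 * j + 1) :=
      fib_step (u + 2 * j + 1) _ _ _ (by ring) (by ring) rfl
    have r2 : Nat.fib (2 * j + 4) = Nat.fib (2 * j + 3) + Nat.fib (2 * j + 2) :=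
      fib_step (2 * j + 2) _ _ _ (by ring) (by ring) rfl
    have r1 : Nat.fib (2 * j + 3) = Nat.fib (2 * j + 2) + Nat.fib (2 * j + 1) :=
      fib_step (2 * j + 1) _ _ _ (by ring) (by ring) rfl
    rw [fib_congr (show 2 * (j + 1) + 1 = 2 * j + 3 by ring),
        fib_congr (show 2 * (j + 1) + 2 = 2 * j + 4 by ring),
        fib_congr (show u + 2 * (j + 1) + 2 = u + 2 * j + 4 by ring),
        fib_congr (show u + 2 * (j + 1) + 1 = u + 2 * j + 3 by ring),
        r4, r3, r2, r1]
    nlinarith [ih u]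

lemma key1 (a b : ℕ) :
    lucasNat (a + 1) * Nat.fib (a + 2 * b + 2) + Nat.fib (a + 1) * lucasNat (a + 2 * b + 2) =
      2 * Nat.fib (2 * a + 2 * b + 3) := by
  rw [lucasNat_eq_fib, fib_congr (show a + 2 * b + 2 = a + 2 * b + 1 + 1 by ring),
      lucasNat_eq_fib]
  have h1 := Nat.fib_add a (a + 2 * b + 2)
  have h2 := Nat.fib_add (a + 1) (a + 2 * b + 1)
  rw [fib_congr (show a + (a + 2 * b + 2) + 1 = 2 * a + 2 * b + 3 by ring)] at h1
  rw [fib_congr (show a + 1 + (a + 2 * b + 1) + 1 = 2 * a + 2 * b + 3 by ring)] at h2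
  rw [fib_congr (show a + 2 * b + 1 + 1 = a + 2 * b + 2 by ring)] at h1 h2 ⊢
  rw [fib_congr (show a + 2 * b + 2 + 1 = a + 2 * b + 3 by ring)] at h1
  rw [fib_congr (show a + 2 * b + 1 + 2 = a + 2 * b + 3 by ring)]
  have h3 : Nat.fib (a + 2 * b + 3) = Nat.fib (a + 2 * b + 2) + Nat.fib (a + 2 * b + 1) :=
    fib_step (a + 2 * b + 1) _ _ _ (by ring) (by ring) rfl
  nlinarith [h1, h2, h3]

lemma keyxm (a : ℕ) : Nat.fib (a + 1) * lucasNat (a + 1) = Nat.fib (2 * a + 2) := by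
  rw [lucasNat_eq_fib]
  have h1 := Nat.fib_add a (a + 1)
  rw [fib_congr (show a + (a + 1) + 1 = 2 * a + 2 by ring)] at h1
  rw [fib_congr (show a + 1 + 1 = a + 2 by ring)] at h1
  nlinarith [h1]

lemma key2 (a b : ℕ) :
    Nat.fib (2 * a + 4 * b + 4) =
      Nat.fib (2 * a + 2 * b + 3) * lucasNat (2 * b + 1) + Nat.fib (2 * a + 2) := by
  rw [lucasNat_eq_fib]
  have h1 := Nat.fib_add (2 * b) (2 * a + 2 * b + 3)
  rw [fib_congr (show 2 * b + (2 * a + 2 * b + 3) + 1 = 2 * a + 4 * b + 4 by ring),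
      fib_congr (show 2 * a + 2 * b + 3 + 1 = 2 * a + 2 * b + 4 by ring)] at h1
  have h2 := docagne b (2 * a + 2)
  rw [fib_congr (show 2 * a + 2 + 2 * b + 2 = 2 * a + 2 * b + 4 by ring),
      fib_congr (show 2 * a + 2 + 2 * b + 1 = 2 * a + 2 * b + 3 by ring)] at h2
  nlinarith [h1, h2]

theorem stmt16 (m n : ℕ) (hm : 0 < m) (hn : 0 < n) :
    Real.arctan (2 / (lucasNat (2 * n - 1) : ℝ)) =
      Real.arctan ((lucasNat m : ℝ) / lucasNat (2 * n + m - 1)) +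
        Real.arctan ((Nat.fib m : ℝ) / Nat.fib (2 * n + m - 1)) := by
  obtain ⟨a, rfl⟩ : ∃ a, m = a + 1 := ⟨m - 1, by omega⟩
  obtain ⟨b, rfl⟩ : ∃ b, n = b + 1 := ⟨n - 1, by omega⟩
  rw [show 2 * (b + 1) - 1 = 2 * b + 1 by omega,
      show 2 * (b + 1) + (a + 1) - 1 = a + 2 * b + 2 by omega]
  -- positivity facts
  have hLkpos : 0 < lucasNat (2 * b + 1) := by
    rw [lucasNat_eq_fib]
    have : 0 < Nat.fib (2 * b + 2) := by simp
    omega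
  have hLNpos : 0 < lucasNat (a + 2 * b + 2) := by
    rw [show a + 2 * b + 2 = (a + 2 * b + 1) + 1 by ring, lucasNat_eq_fib]
    have : 0 < Nat.fib (a + 2 * b + 1 + 2) := by simp
    omega
  have hFNpos : 0 < Nat.fib (a + 2 * b + 2) := by simp
  have hFxpos : 0 < Nat.fib (2 * a + 2 * b + 3) := by simp
  have hflt : Nat.fib (2 * a + 2) < Nat.fib (2 * a + 4 * b + 4) := by
    rw [Nat.fib_lt_fib (by omega)]; omega
  -- real casts
  have cLk : (0:ℝ) < lucasNat (2 * b + 1) := by exact_mod_cast hLkpos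
  have cLN : (0:ℝ) < lucasNat (a + 2 * b + 2) := by exact_mod_cast hLNpos
  have cFN : (0:ℝ) < Nat.fib (a + 2 * b + 2) := by exact_mod_cast hFNpos
  have cFx : (0:ℝ) < Nat.fib (2 * a + 2 * b + 3) := by exact_mod_cast hFxpos
  have keyxN : Nat.fib (a + 2 * b + 2) * lucasNat (a + 2 * b + 2) =
      Nat.fib (2 * a + 4 * b + 4) := by
    have := keyxm (a + 2 * b + 1)
    rw [fib_congr (show a + 2 * b + 1 + 1 = a + 2 * b + 2 by ring),
        show a + 2 * b + 1 + 1 = a + 2 * b + 2 by ring,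
        fib_congr (show 2 * (a + 2 * b + 1) + 2 = 2 * a + 4 * b + 4 by ring)] at this
    exact this
  have c1 : (lucasNat (a + 1) : ℝ) * Nat.fib (a + 2 * b + 2) +
      (Nat.fib (a + 1) : ℝ) * lucasNat (a + 2 * b + 2) =
      2 * Nat.fib (2 * a + 2 * b + 3) := by exact_mod_cast key1 a b
  have c2 : (Nat.fib (a + 1) : ℝ) * lucasNat (a + 1) = Nat.fib (2 * a + 2) := by
    exact_mod_cast keyxm a
  have c3 : (Nat.fib (a + 2 * b + 2) : ℝ) * lucasNat (a + 2 * b + 2) =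
      Nat.fib (2 * a + 4 * b + 4) := by exact_mod_cast keyxN
  have c4 : (Nat.fib (2 * a + 4 * b + 4) : ℝ) =
      (Nat.fib (2 * a + 2 * b + 3) : ℝ) * lucasNat (2 * b + 1) + Nat.fib (2 * a + 2) := by
    exact_mod_cast key2 a b
  have hxy : ((lucasNat (a + 1) : ℝ) / lucasNat (a + 2 * b + 2)) *
      ((Nat.fib (a + 1) : ℝ) / Nat.fib (a + 2 * b + 2)) < 1 := by
    rw [div_mul_div_comm, div_lt_one (by positivity)]
    have cflt : (Nat.fib (2 * a + 2) : ℝ) < Nat.fib (2 * a + 4 * b + 4) := by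
      exact_mod_cast hflt
    nlinarith [c2, c3, cflt]
  rw [Real.arctan_add hxy]
  congr 1
  have hden : (0:ℝ) < 1 - (lucasNat (a + 1) : ℝ) / lucasNat (a + 2 * b + 2) *
      ((Nat.fib (a + 1) : ℝ) / Nat.fib (a + 2 * b + 2)) := by linarith
  rw [eq_comm, div_eq_div_iff hden.ne' cLk.ne']
  field_simp
  nlinarith [c1, c2, c3, c4, mul_pos cLN cFN]
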